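/- For all b ∈ ℝ^K, the softmax-weighted average of b satisfies (∑_{i=1}^K e^{b_i} b_i) / (∑_{j=1}^K e^{b_j}) ≥ max_{1≤i≤K} b_i − log(K). -/
import Mathlib

open Real Finset

lemma aux1 (t : ℝ) : -Real.exp (-1) ≤ t * Real.exp t := by
  have h := Real.add_one_le_exp (-t - 1)
  have he : Real.exp (-t - 1) * Real.exp t = Real.exp (-1) := by
    rw [← Real.exp_add]; ring_nf
  nlinarith [Real.exp_pos t]

lemma aux2 (x a : ℝ) : -Real.exp (-a - 1) ≤ Real.exp x * (x + a) := by
  have h := aux1 (x + a)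
  have he : Real.exp x = Real.exp (x + a) * Real.exp (-a) := by
    rw [← Real.exp_add]; ring_nf
  have he2 : Real.exp (-a - 1) = Real.exp (-1) * Real.exp (-a) := by
    rw [← Real.exp_add]; ring_nf
  rw [he, he2]
  nlinarith [mul_le_mul_of_nonneg_right h (Real.exp_pos (-a)).le]

theorem softmax_weighted_average_ge (K : ℕ) (hK : 0 < K) (b : Fin K → ℝ) :
    (∑ i, Real.exp (b i) * b i) / (∑ j, Real.exp (b j)) ≥
      (Finset.univ.sup' (Finset.univ_nonempty_iff.mpr (Fin.pos_iff_nonempty.mp hK)) b)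
        - Real.log K := by
  have hne : (Finset.univ : Finset (Fin K)).Nonempty :=
    Finset.univ_nonempty_iff.mpr (Fin.pos_iff_nonempty.mp hK)
  set M := Finset.univ.sup' hne b with hM
  have hS : 0 < ∑ j, Real.exp (b j) :=
    Finset.sum_pos (fun i _ => Real.exp_pos _) hne
  rw [ge_iff_le, le_div_iff₀ hS]
  obtain ⟨i0, -, hi0⟩ := Finset.exists_mem_eq_sup' hne b
  set C := Real.exp (M - Real.log K - 1) with hCdef
  have key : ∀ i : Fin K, -C ≤ Real.exp (b i) * (b i - M + Real.log K) := by
    intro i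
    have h := aux2 (b i) (Real.log K - M)
    have h1 : -(Real.log K - M) - 1 = M - Real.log K - 1 := by ring
    have h2 : b i + (Real.log K - M) = b i - M + Real.log K := by ring
    rw [h1, h2] at h
    exact h
  -- sum bound
  have hsplit : Real.exp (b i0) * (b i0 - M + Real.log K)
      + ∑ i ∈ Finset.univ.erase i0, Real.exp (b i) * (b i - M + Real.log K)
      = ∑ i, Real.exp (b i) * (b i - M + Real.log K) :=
    Finset.add_sum_erase _ (fun i => Real.exp (b i) * (b i - M + Real.log K)) (Finset.mem_univ i0)
  have hcard : ((Finset.univ.erase i0).card : ℝ) = (K : ℝ) - 1 := by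
    rw [Finset.card_erase_of_mem (Finset.mem_univ i0)]
    simp [Finset.card_univ]
    push_cast [Nat.cast_sub hK]
    ring
  have htail : -(((K : ℝ) - 1) * C) ≤
      ∑ i ∈ Finset.univ.erase i0, Real.exp (b i) * (b i - M + Real.log K) := by
    calc -(((K : ℝ) - 1) * C) = ∑ _i ∈ Finset.univ.erase i0, (-C) := by
          rw [Finset.sum_const, nsmul_eq_mul, hcard]; ring
      _ ≤ _ := Finset.sum_le_sum (fun i _ => key i)
  have hi0term : Real.exp (b i0) * (b i0 - M + Real.log K) = Real.exp M * Real.log K := by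
    rw [← hi0]; ring
  -- head + tail lower bound nonneg
  have hK1 : (1 : ℝ) ≤ (K : ℝ) := by exact_mod_cast hK
  have hlogK : (K : ℝ) - 1 ≤ (K : ℝ) * Real.log K := by
    have h := Real.log_le_sub_one_of_pos (x := 1 / (K : ℝ)) (by positivity)
    rw [Real.log_div one_ne_zero (by positivity), Real.log_one] at h
    have hKpos : (0 : ℝ) < K := by linarith
    have : 1 - 1 / (K : ℝ) ≤ Real.log K := by linarith
    calc (K : ℝ) - 1 = (K : ℝ) * (1 - 1 / (K : ℝ)) := by field_simp
      _ ≤ (K : ℝ) * Real.log K := by nlinarith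
  have hCK : C * ((K : ℝ) * Real.exp 1) = Real.exp M := by
    rw [hCdef, ← Real.exp_log (show (0:ℝ) < K by linarith), ← Real.exp_add, ← Real.exp_add,
      Real.exp_log (show (0:ℝ) < K by linarith)]
    ring_nf
  have hlogK0 : 0 ≤ Real.log K := Real.log_nonneg hK1
  have hexp1 : (1 : ℝ) ≤ Real.exp 1 := by
    have := Real.add_one_le_exp (1 : ℝ); linarith
  have hCpos : 0 < C := Real.exp_pos _
  have hnonneg : 0 ≤ ∑ i, Real.exp (b i) * (b i - M + Real.log K) := by
    rw [← hsplit, hi0term]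
    have : ((K : ℝ) - 1) * C ≤ Real.exp M * Real.log K := by
      rw [← hCK]
      have h1 : ((K:ℝ)-1)*C ≤ ((K:ℝ)*Real.log K)*C :=
        mul_le_mul_of_nonneg_right hlogK hCpos.le
      have h2 : ((K:ℝ)*Real.log K)*C ≤ ((K:ℝ)*Real.log K)*C*Real.exp 1 := by
        nlinarith [mul_nonneg (mul_nonneg (le_trans zero_le_one hK1) hlogK0) hCpos.le]
      nlinarith
    linarith
  have hexpand : ∑ i, Real.exp (b i) * (b i - M + Real.log K)
      = (∑ i, Real.exp (b i) * b i) - (M - Real.log K) * ∑ j, Real.exp (b j) := by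
    rw [Finset.mul_sum, ← Finset.sum_sub_distrib]
    exact Finset.sum_congr rfl (fun i _ => by ring)
  linarith [hexpand ▸ hnonneg]
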